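/- Let b be a Schwartz function on ℝⁿ whose Fourier transform 𝓕b is supported in the closed unit ball B̄(0,1), let r > 0, and let y₁, …, y_k ∈ ℝⁿ satisfy |y_i − y_j| ≥ 2r for all i ≠ j. Define b_j(x) = rⁿ · e^{2πi⟨x, y_j⟩} · b(rx), so that 𝓕b_j(ξ) = 𝓕b((ξ − y_j)/r). Then for every R > 0, ∫_{ℝⁿ} |Σ_{j=1}^k b_j(x)| dx ≤ vol(B̄(0,1))^{1/2} · R^{n/2} · √k · ‖b‖_{L²} + (k/R) · ∫_{ℝⁿ} |x| · |b(x)| dx. -/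

import Mathlib

open MeasureTheory Real Set Metric
open scoped ENNReal FourierTransform RealInnerProductSpace SchwartzMap ComplexConjugate

set_option maxHeartbeats 1000000

lemma cross_zero {n : ℕ} (b : 𝓢(EuclideanSpace ℝ (Fin n), ℂ))
    (hb : tsupport (𝓕 ⇑b) ⊆ closedBall (0 : EuclideanSpace ℝ (Fin n)) 1)
    (w : EuclideanSpace ℝ (Fin n)) (hw : 2 ≤ ‖w‖) :
    ∫ u, Complex.exp (2 * π * Complex.I * (⟪u, w⟫ : ℂ)) * (b u * conj (b u)) = 0 := by
  have hFb : Integrable (𝓕 ⇑b) := by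
    have := (SchwartzMap.fourierTransformCLM ℝ b).integrable (μ := volume)
    rwa [SchwartzMap.fourierTransformCLM_apply] at this
  have hfinv : Integrable (𝓕⁻ ⇑b) := by
    have e : (𝓕⁻ ⇑b) = (𝓕 ⇑b) ∘ (fun x => -x) := by
      funext x; exact Real.fourierInv_eq_fourier_neg _ _
    rw [e]
    exact ((Measure.measurePreserving_neg volume).integrable_comp hFb.aestronglyMeasurable).2 hFb
  set g : (EuclideanSpace ℝ (Fin n)) → ℂ := fun u => Complex.exp (2 * π * Complex.I * (⟪u, w⟫ : ℂ)) * conj (b u) with hgdef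
  have hconj : Integrable (fun u => (conj (b u) : ℂ)) :=
    b.integrable.mono (continuous_star.comp b.continuous).aestronglyMeasurable
      (Filter.Eventually.of_forall fun u => by simp)
  have hc1 : Continuous fun u : (EuclideanSpace ℝ (Fin n)) => (⟪u, w⟫ : ℝ) := continuous_id.inner continuous_const
  have hce : Continuous fun u : (EuclideanSpace ℝ (Fin n)) => Complex.exp (2 * π * Complex.I * (⟪u, w⟫ : ℂ)) :=
    Complex.continuous_exp.comp (continuous_const.mul (Complex.continuous_ofReal.comp hc1))
  have hg : Integrable g := by
    apply hconj.bdd_mul (c := 1) hce.aestronglyMeasurable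
    refine (Filter.Eventually.of_forall fun x => le_of_eq ?_)
    rw [Complex.norm_exp]
    simp [Complex.mul_re]
  have hflip : (innerₗ (EuclideanSpace ℝ (Fin n))).flip = innerₗ (EuclideanSpace ℝ (Fin n)) := by
    apply LinearMap.ext; intro x; apply LinearMap.ext; intro z
    simpa using real_inner_comm x z
  have key := VectorFourier.integral_fourierIntegral_smul_eq_flip
    (e := Real.fourierChar) (L := innerₗ (EuclideanSpace ℝ (Fin n))) (μ := volume) (ν := volume)
    Real.continuous_fourierChar continuous_inner hfinv hg
  rw [hflip] at key
  have hinv : VectorFourier.fourierIntegral Real.fourierChar volume (innerₗ (EuclideanSpace ℝ (Fin n))) (𝓕⁻ ⇑b) = ⇑b :=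
    Continuous.fourier_fourierInv_eq b.continuous b.integrable hFb
  rw [hinv] at key
  -- identify LHS of key with our integral
  have hL : ∫ ξ, (b ξ) • g ξ = ∫ u, Complex.exp (2 * π * Complex.I * (⟪u, w⟫ : ℂ)) * (b u * conj (b u)) := by
    congr 1; funext u
    simp only [hgdef, smul_eq_mul]; ring
  rw [hL] at key
  rw [key]
  -- now show RHS is zero
  have hgF : ∀ x : (EuclideanSpace ℝ (Fin n)), VectorFourier.fourierIntegral Real.fourierChar volume (innerₗ (EuclideanSpace ℝ (Fin n))) g x
      = conj (𝓕 ⇑b (w - x)) := by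
    intro x
    have h1 : VectorFourier.fourierIntegral Real.fourierChar volume (innerₗ (EuclideanSpace ℝ (Fin n))) g x
        = ∫ u, (Real.fourierChar (-⟪u, x⟫ : ℝ) : ℂ) * g u := rfl
    have h2 : 𝓕 ⇑b (w - x) = ∫ u, (Real.fourierChar (-⟪u, w - x⟫ : ℝ) : ℂ) * b u := rfl
    rw [h1, h2, ← integral_conj]
    congr 1; funext u
    simp only [hgdef, Real.fourierChar_apply, map_mul, ← Complex.exp_conj]
    rw [show ∀ z c : ℂ, Complex.exp z * (Complex.exp (2 * π * Complex.I * (⟪u, w⟫ : ℂ)) * c)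
        = Complex.exp (z + 2 * π * Complex.I * (⟪u, w⟫ : ℂ)) * c by
      intro z c; rw [Complex.exp_add]; ring]
    congr 1
    · congr 1
      simp only [map_mul, Complex.conj_I, Complex.conj_ofReal, map_ofNat]
      push_cast [inner_sub_right]
      ring
  have hnull : (fun x : (EuclideanSpace ℝ (Fin n)) => (𝓕⁻ ⇑b x) • VectorFourier.fourierIntegral Real.fourierChar volume (innerₗ (EuclideanSpace ℝ (Fin n))) g x) =ᵐ[volume] 0 := by
    have hsub : {x : (EuclideanSpace ℝ (Fin n)) | (𝓕⁻ ⇑b x) • VectorFourier.fourierIntegral Real.fourierChar volume (innerₗ (EuclideanSpace ℝ (Fin n))) g x ≠ 0}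
        ⊆ {(2:ℝ)⁻¹ • w} := by
      intro x hx
      simp only [mem_setOf_eq, smul_eq_mul, ne_eq, mul_eq_zero, not_or] at hx
      obtain ⟨hx1, hx2⟩ := hx
      have hn1 : ‖x‖ ≤ 1 := by
        rw [Real.fourierInv_eq_fourier_neg] at hx1
        have := hb (subset_tsupport _ hx1)
        simpa [dist_eq_norm] using this
      have hn2 : ‖w - x‖ ≤ 1 := by
        rw [hgF x] at hx2
        have : 𝓕 ⇑b (w - x) ≠ 0 := fun h => hx2 (by simp [h])
        have := hb (subset_tsupport _ this)
        simpa [dist_eq_norm] using this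
      have hpar := parallelogram_law_with_norm ℝ (w - x) x
      have hww : ‖w - x + x‖ = ‖w‖ := by congr 1; abel
      rw [hww] at hpar
      have e1 : ‖w - x‖ * ‖w - x‖ ≤ 1 := by nlinarith [norm_nonneg (w - x)]
      have e2 : ‖x‖ * ‖x‖ ≤ 1 := by nlinarith [norm_nonneg x]
      have e3 : 4 ≤ ‖w‖ * ‖w‖ := by nlinarith
      have hz : ‖w - x - x‖ = 0 := by nlinarith [norm_nonneg (w - x - x)]
      have hz2 : w - x - x = 0 := by rwa [norm_eq_zero] at hz
      have hx2' : w = x + x := by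
        have := sub_eq_zero.1 (by rwa [sub_sub] at hz2); rw [this]
      simp only [mem_singleton_iff, hx2', ← two_smul ℝ x, smul_smul]
      norm_num
    have hnt : Nontrivial (EuclideanSpace ℝ (Fin n)) := by
      refine nontrivial_of_ne w 0 fun h => ?_
      rw [h, norm_zero] at hw; linarith
    exact (ae_iff).2 (measure_mono_null hsub (measure_singleton _))
  exact integral_eq_zero_of_ae hnull

lemma l2_eq {n k : ℕ} (b : 𝓢(EuclideanSpace ℝ (Fin n), ℂ))
    (hb : tsupport (𝓕 ⇑b) ⊆ closedBall (0 : EuclideanSpace ℝ (Fin n)) 1)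
    {r : ℝ} (hr : 0 < r)
    (y : Fin k → EuclideanSpace ℝ (Fin n))
    (hy : ∀ i j, i ≠ j → 2 * r ≤ dist (y i) (y j)) :
    ∫ x, ‖∑ j, (r : ℂ) ^ n * Complex.exp (2 * π * Complex.I * (⟪x, y j⟫ : ℂ)) * b (r • x)‖ ^ 2
      = k * r ^ n * ∫ u, ‖b u‖ ^ 2 := by
  set c : Fin k → EuclideanSpace ℝ (Fin n) → ℂ :=
    fun j x => (r : ℂ) ^ n * Complex.exp (2 * π * Complex.I * (⟪x, y j⟫ : ℂ)) * b (r • x) with hc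
  have h0 : ∫ x, ‖∑ j, (r : ℂ) ^ n * Complex.exp (2 * π * Complex.I * (⟪x, y j⟫ : ℂ)) * b (r • x)‖ ^ 2
      = ∫ x, ‖∑ j, c j x‖ ^ 2 := by simp only [hc]
  rw [h0]
  -- basic facts
  have hbr : Integrable (fun x : EuclideanSpace ℝ (Fin n) => b (r • x)) :=
    (integrable_comp_smul_iff volume ⇑b hr.ne').2 b.integrable
  have hcont_e : ∀ z : EuclideanSpace ℝ (Fin n),
      Continuous fun x : EuclideanSpace ℝ (Fin n) => Complex.exp (2 * π * Complex.I * (⟪x, z⟫ : ℂ)) :=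
    fun z => Complex.continuous_exp.comp (continuous_const.mul
      (Complex.continuous_ofReal.comp (continuous_id.inner continuous_const)))
  have hnorm_e : ∀ (z : EuclideanSpace ℝ (Fin n)) x,
      ‖Complex.exp (2 * π * Complex.I * (⟪x, z⟫ : ℂ))‖ = 1 := by
    intro z x
    rw [Complex.norm_exp]
    simp [Complex.mul_re]
  have hnorm_r : ‖(r : ℂ) ^ n‖ = r ^ n := by
    rw [norm_pow, Complex.norm_real, Real.norm_eq_abs, abs_of_nonneg hr.le]
  have hnorm_c : ∀ j x, ‖c j x‖ = r ^ n * ‖b (r • x)‖ := by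
    intro j x
    rw [hc]
    simp only [norm_mul, hnorm_e, hnorm_r, mul_one]
  have hcj_cont : ∀ j, Continuous (c j) := fun j =>
    (continuous_const.mul (hcont_e (y j))).mul (b.continuous.comp (continuous_const_smul r))
  have hcj_int : ∀ j, Integrable (c j) := by
    intro j
    refine hbr.bdd_mul ((continuous_const.mul (hcont_e (y j))).aestronglyMeasurable)
      (c := r ^ n) (Filter.Eventually.of_forall fun x => ?_)
    rw [norm_mul, hnorm_e, mul_one, hnorm_r]
  obtain ⟨C, hC⟩ : ∃ C, ∀ u, ‖b u‖ ≤ C :=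
    ⟨SchwartzMap.seminorm ℝ 0 0 b, fun u => SchwartzMap.norm_le_seminorm ℝ b u⟩
  have hprod_int : ∀ i j, Integrable (fun x => c i x * conj (c j x)) := by
    intro i j
    have hconj : Integrable (fun x => (conj (c j x) : ℂ)) :=
      (hcj_int j).mono (continuous_star.comp (hcj_cont j)).aestronglyMeasurable
        (Filter.Eventually.of_forall fun u => by simp)
    refine hconj.bdd_mul (hcj_cont i).aestronglyMeasurable (c := r ^ n * C) (Filter.Eventually.of_forall fun x => ?_)
    rw [hnorm_c]
    exact mul_le_mul_of_nonneg_left (hC _) (by positivity)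
  have hswap : ∫ x, (∑ j, c j x) * conj (∑ j, c j x) = ∑ i, ∑ j, ∫ x, c i x * conj (c j x) := by
    have hexp : ∀ x, (∑ j, c j x) * conj (∑ j, c j x) = ∑ i, ∑ j, c i x * conj (c j x) := by
      intro x
      rw [map_sum, Finset.sum_mul_sum]
    simp_rw [hexp]
    rw [integral_finset_sum _ (fun i _ => integrable_finset_sum _ (fun j _ => hprod_int i j))]
    exact Finset.sum_congr rfl fun i _ => integral_finset_sum _ fun j _ => hprod_int i j
  -- diagonal terms
  have hdiag : ∀ j, ∫ x, c j x * conj (c j x) = ((r ^ n * ∫ u, ‖b u‖ ^ 2 : ℝ) : ℂ) := by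
    intro j
    have h1 : ∀ x : EuclideanSpace ℝ (Fin n),
        c j x * conj (c j x) = ((r ^ n * (r ^ n * ‖b (r • x)‖ ^ 2) : ℝ) : ℂ) := by
      intro x
      rw [Complex.mul_conj, Complex.normSq_eq_norm_sq, hnorm_c]
      push_cast
      ring
    simp_rw [h1]
    have hio : ∫ x : EuclideanSpace ℝ (Fin n), ((r ^ n * (r ^ n * ‖b (r • x)‖ ^ 2) : ℝ) : ℂ)
        = ((∫ x : EuclideanSpace ℝ (Fin n), r ^ n * (r ^ n * ‖b (r • x)‖ ^ 2) : ℝ) : ℂ) :=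
      integral_ofReal
    rw [hio]
    have h2 : ∫ x : EuclideanSpace ℝ (Fin n), ‖b (r • x)‖ ^ 2 = (r ^ n)⁻¹ * ∫ u, ‖b u‖ ^ 2 := by
      have := Measure.integral_comp_smul (volume : Measure (EuclideanSpace ℝ (Fin n)))
        (fun u => ‖b u‖ ^ 2) r
      rw [finrank_euclideanSpace_fin] at this
      rw [this, smul_eq_mul, abs_of_nonneg (by positivity)]
    rw [integral_const_mul, integral_const_mul, h2]
    congr 1
    field_simp
  -- off-diagonal terms vanish
  have hoff : ∀ i j, i ≠ j → ∫ x, c i x * conj (c j x) = 0 := by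
    intro i j hij
    set w : EuclideanSpace ℝ (Fin n) := r⁻¹ • (y i - y j) with hwdef
    have hw2 : 2 ≤ ‖w‖ := by
      have hd := hy i j hij
      rw [dist_eq_norm] at hd
      rw [hwdef, norm_smul, Real.norm_eq_abs, abs_inv, abs_of_nonneg hr.le]
      have h1 : r⁻¹ * (2 * r) ≤ r⁻¹ * ‖y i - y j‖ :=
        mul_le_mul_of_nonneg_left hd (inv_nonneg.2 hr.le)
      have h2 : r⁻¹ * (2 * r) = 2 := by field_simp
      linarith
    have hpt : ∀ x, c i x * conj (c j x) = ((r:ℂ)^n * (r:ℂ)^n) *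
        ((fun u => Complex.exp (2 * π * Complex.I * (⟪u, w⟫ : ℂ)) * (b u * conj (b u))) (r • x)) := by
      intro x
      have hinner : (⟪r • x, w⟫ : ℝ) = ⟪x, y i⟫ - ⟪x, y j⟫ := by
        rw [hwdef, real_inner_smul_left, real_inner_smul_right, inner_sub_right]
        field_simp
      have hce : conj (Complex.exp (2 * π * Complex.I * (⟪x, y j⟫ : ℂ)))
          = Complex.exp (-(2 * π * Complex.I * (⟪x, y j⟫ : ℂ))) := by
        rw [← Complex.exp_conj]
        congr 1
        simp only [map_mul, Complex.conj_I, Complex.conj_ofReal, map_ofNat]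
        ring
      simp only [hc, map_mul, map_pow, Complex.conj_ofReal, hce]
      rw [hinner]
      rw [show (2 * π * Complex.I * (((⟪x, y i⟫ - ⟪x, y j⟫ : ℝ)) : ℂ))
          = 2 * π * Complex.I * ((⟪x, y i⟫ : ℝ) : ℂ) + -(2 * π * Complex.I * ((⟪x, y j⟫ : ℝ) : ℂ))
        from by push_cast; ring, Complex.exp_add]
      ring
    simp_rw [hpt]
    rw [integral_const_mul]
    have := Measure.integral_comp_smul (volume : Measure (EuclideanSpace ℝ (Fin n)))
      (fun u => Complex.exp (2 * π * Complex.I * (⟪u, w⟫ : ℂ)) * (b u * conj (b u))) r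
    rw [this, cross_zero b hb w hw2, smul_zero, mul_zero]
  -- put it together
  have hdouble : ∫ x, (∑ j, c j x) * conj (∑ j, c j x)
      = ((k * r ^ n * ∫ u, ‖b u‖ ^ 2 : ℝ) : ℂ) := by
    rw [hswap]
    have : ∀ i : Fin k, ∑ j, ∫ x, c i x * conj (c j x) = ((r ^ n * ∫ u, ‖b u‖ ^ 2 : ℝ) : ℂ) := by
      intro i
      rw [Finset.sum_eq_single i (fun j _ hj => hoff i j (Ne.symm hj)) (by simp)]
      exact hdiag i
    rw [Finset.sum_congr rfl fun i _ => this i]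
    simp [Finset.sum_const, Finset.card_univ]
    push_cast
    ring
  have hint : Integrable (fun x => (∑ j, c j x) * conj (∑ j, c j x)) := by
    have hexp : ∀ x, (∑ j, c j x) * conj (∑ j, c j x) = ∑ i, ∑ j, c i x * conj (c j x) := by
      intro x
      rw [map_sum, Finset.sum_mul_sum]
    simp_rw [hexp]
    exact integrable_finset_sum _ fun i _ => integrable_finset_sum _ fun j _ => hprod_int i j
  have hre := integral_re hint
  rw [hdouble] at hre
  have hfinal : ∫ x, ‖∑ j, c j x‖ ^ 2 = ∫ x, RCLike.re ((∑ j, c j x) * conj (∑ j, c j x)) := by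
    congr 1
    funext x
    rw [Complex.mul_conj, Complex.normSq_eq_norm_sq]
    simp [← Complex.ofReal_pow]
  rw [hfinal, hre]
  exact Complex.ofReal_re _

lemma toReal_eLpNorm_two {α : Type*} [MeasurableSpace α] {μ : Measure α} {f : α → ℂ}
    (hm : MemLp f 2 μ) :
    (eLpNorm f 2 μ).toReal = (∫ x, ‖f x‖ ^ 2 ∂μ) ^ ((1:ℝ)/2) := by
  rw [hm.eLpNorm_eq_integral_rpow_norm (by norm_num) (by norm_num)]
  rw [ENNReal.toReal_ofReal (by positivity)]
  norm_num [Real.rpow_two, one_div]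

/-- The `L¹`-bound for a sum of modulated dilates of a band-limited Schwartz function:
if `supp 𝓕b ⊆ B̄(0,1)` and the frequencies `y_j` are `2r`-separated, then with
`b_j(x) = rⁿ e^{2πi⟨x,y_j⟩} b(rx)` one has, for every `R > 0`,
`‖Σ b_j‖₁ ≤ vol(B̄(0,1))^{1/2} R^{n/2} √k ‖b‖₂ + (k/R) ∫ |x||b(x)| dx`. -/
theorem l1_bound_of_modulated_dilates
    (n k : ℕ) (b : 𝓢(EuclideanSpace ℝ (Fin n), ℂ))
    (hb : tsupport (𝓕 ⇑b) ⊆ closedBall (0 : EuclideanSpace ℝ (Fin n)) 1)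
    (r : ℝ) (hr : 0 < r)
    (y : Fin k → EuclideanSpace ℝ (Fin n))
    (hy : ∀ i j, i ≠ j → 2 * r ≤ dist (y i) (y j))
    (R : ℝ) (hR : 0 < R) :
    ∫ x, ‖∑ j, (r : ℂ) ^ n * Complex.exp (2 * π * Complex.I * (⟪x, y j⟫ : ℂ)) * b (r • x)‖ ≤
      (volume (closedBall (0 : EuclideanSpace ℝ (Fin n)) 1)).toReal ^ ((1 : ℝ) / 2) *
          R ^ ((n : ℝ) / 2) * Real.sqrt k * (eLpNorm ⇑b 2 volume).toReal +
        ((k : ℝ) / R) * ∫ x, ‖x‖ * ‖b x‖ := by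
  set c : Fin k → EuclideanSpace ℝ (Fin n) → ℂ :=
    fun j x => (r : ℂ) ^ n * Complex.exp (2 * π * Complex.I * (⟪x, y j⟫ : ℂ)) * b (r • x) with hc
  have hgoal : (∫ x, ‖∑ j, (r : ℂ) ^ n * Complex.exp (2 * π * Complex.I * (⟪x, y j⟫ : ℂ)) * b (r • x)‖)
      = ∫ x, ‖∑ j, c j x‖ := by simp only [hc]
  rw [hgoal]
  -- basic facts about `c`
  have hbr : Integrable (fun x : EuclideanSpace ℝ (Fin n) => b (r • x)) :=
    (integrable_comp_smul_iff volume ⇑b hr.ne').2 b.integrable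
  have hcont_e : ∀ z : EuclideanSpace ℝ (Fin n),
      Continuous fun x : EuclideanSpace ℝ (Fin n) => Complex.exp (2 * π * Complex.I * (⟪x, z⟫ : ℂ)) :=
    fun z => Complex.continuous_exp.comp (continuous_const.mul
      (Complex.continuous_ofReal.comp (continuous_id.inner continuous_const)))
  have hnorm_e : ∀ (z : EuclideanSpace ℝ (Fin n)) x,
      ‖Complex.exp (2 * π * Complex.I * (⟪x, z⟫ : ℂ))‖ = 1 := by
    intro z x
    rw [Complex.norm_exp]
    simp [Complex.mul_re]
  have hnorm_r : ‖(r : ℂ) ^ n‖ = r ^ n := by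
    rw [norm_pow, Complex.norm_real, Real.norm_eq_abs, abs_of_nonneg hr.le]
  have hnorm_c : ∀ j x, ‖c j x‖ = r ^ n * ‖b (r • x)‖ := by
    intro j x
    rw [hc]
    simp only [norm_mul, hnorm_e, hnorm_r, mul_one]
  have hcj_cont : ∀ j, Continuous (c j) := fun j =>
    (continuous_const.mul (hcont_e (y j))).mul (b.continuous.comp (continuous_const_smul r))
  have hcj_int : ∀ j, Integrable (c j) := by
    intro j
    refine hbr.bdd_mul ((continuous_const.mul (hcont_e (y j))).aestronglyMeasurable)
      (c := r ^ n) (Filter.Eventually.of_forall fun x => ?_)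
    rw [norm_mul, hnorm_e, mul_one, hnorm_r]
  obtain ⟨C, hC⟩ : ∃ C, ∀ u, ‖b u‖ ≤ C :=
    ⟨SchwartzMap.seminorm ℝ 0 0 b, fun u => SchwartzMap.norm_le_seminorm ℝ b u⟩
  have hf_cont : Continuous fun x => ∑ j, c j x := continuous_finset_sum _ fun j _ => hcj_cont j
  have hf_int : Integrable fun x => ∑ j, c j x := integrable_finset_sum _ fun j _ => hcj_int j
  have hprod_int : ∀ i j, Integrable (fun x => c i x * conj (c j x)) := by
    intro i j
    have hconj : Integrable (fun x => (conj (c j x) : ℂ)) :=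
      (hcj_int j).mono (continuous_star.comp (hcj_cont j)).aestronglyMeasurable
        (Filter.Eventually.of_forall fun u => by simp)
    refine hconj.bdd_mul (hcj_cont i).aestronglyMeasurable (c := r ^ n * C) (Filter.Eventually.of_forall fun x => ?_)
    rw [hnorm_c]
    exact mul_le_mul_of_nonneg_left (hC _) (by positivity)
  have hfsq_int : Integrable fun x => ‖∑ j, c j x‖ ^ 2 := by
    have hint : Integrable (fun x => (∑ j, c j x) * conj (∑ j, c j x)) := by
      have hexp : ∀ x, (∑ j, c j x) * conj (∑ j, c j x) = ∑ i, ∑ j, c i x * conj (c j x) := by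
        intro x
        rw [map_sum, Finset.sum_mul_sum]
      simp_rw [hexp]
      exact integrable_finset_sum _ fun i _ => integrable_finset_sum _ fun j _ => hprod_int i j
    refine hint.re.congr (Filter.Eventually.of_forall fun x => ?_)
    dsimp only
    rw [Complex.mul_conj, Complex.normSq_eq_norm_sq]
    simp [← Complex.ofReal_pow]
  have hmf : MemLp (fun x => ∑ j, c j x) 2 volume :=
    (memLp_two_iff_integrable_sq_norm hf_cont.aestronglyMeasurable).2 hfsq_int
  have hbsq : Integrable (fun u : EuclideanSpace ℝ (Fin n) => ‖b u‖ ^ 2) := by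
    have h := (b.integrable (μ := volume)).norm.bdd_mul
      (b.continuous.norm.aestronglyMeasurable) (c := C) (Filter.Eventually.of_forall fun u => by simpa using hC u)
    simpa [pow_two] using h
  have hmb : MemLp (⇑b) 2 volume :=
    (memLp_two_iff_integrable_sq_norm b.continuous.aestronglyMeasurable).2 hbsq
  have hL2 : ∫ x, ‖∑ j, c j x‖ ^ 2 = k * r ^ n * ∫ u, ‖b u‖ ^ 2 := by
    simp only [hc]
    exact l2_eq b hb hr y hy
  set s : Set (EuclideanSpace ℝ (Fin n)) := closedBall 0 (R / r) with hs
  set I₂ : ℝ := ∫ u : EuclideanSpace ℝ (Fin n), ‖b u‖ ^ 2 with hI₂def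
  set v₁ : ℝ := (volume (closedBall (0 : EuclideanSpace ℝ (Fin n)) 1)).toReal with hv₁def
  have hI₂nn : 0 ≤ I₂ := integral_nonneg fun u => by positivity
  have hv₁nn : 0 ≤ v₁ := ENNReal.toReal_nonneg
  -- split the integral
  have hsplit : ∫ x, ‖∑ j, c j x‖ = (∫ x in s, ‖∑ j, c j x‖) + ∫ x in sᶜ, ‖∑ j, c j x‖ :=
    (integral_add_compl measurableSet_closedBall hf_int.norm).symm
  -- ball part
  have hcs : ∫ x in s, ‖∑ j, c j x‖ ≤
      ((volume s).toReal) ^ ((1:ℝ)/2) * (∫ x, ‖∑ j, c j x‖ ^ 2) ^ ((1:ℝ)/2) := by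
    have e1 : ∫ x in s, ‖∑ j, c j x‖
        = (eLpNorm (fun x => ∑ j, c j x) 1 (volume.restrict s)).toReal := by
      rw [eLpNorm_one_eq_lintegral_enorm]
      exact integral_norm_eq_lintegral_enorm hf_cont.aestronglyMeasurable.restrict
    have e2 : eLpNorm (fun x => ∑ j, c j x) 1 (volume.restrict s)
        ≤ eLpNorm (fun x => ∑ j, c j x) 2 volume * (volume s) ^ ((1:ℝ)/2) := by
      have h := eLpNorm_le_eLpNorm_mul_rpow_measure_univ (p := 1) (q := 2)
        (μ := volume.restrict s) (by norm_num) hf_cont.aestronglyMeasurable.restrict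
      rw [Measure.restrict_apply_univ] at h
      have hexp : (1 / (1:ℝ≥0∞).toReal - 1 / (2:ℝ≥0∞).toReal) = (1:ℝ)/2 := by norm_num
      rw [hexp] at h
      exact h.trans (mul_le_mul_left (eLpNorm_mono_measure _ Measure.restrict_le_self) _)
    have hne : eLpNorm (fun x => ∑ j, c j x) 2 volume * (volume s) ^ ((1:ℝ)/2) ≠ ⊤ :=
      ENNReal.mul_ne_top hmf.eLpNorm_ne_top
        (ENNReal.rpow_ne_top_of_nonneg (by norm_num) measure_closedBall_lt_top.ne)
    calc ∫ x in s, ‖∑ j, c j x‖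
        = (eLpNorm (fun x => ∑ j, c j x) 1 (volume.restrict s)).toReal := e1
      _ ≤ (eLpNorm (fun x => ∑ j, c j x) 2 volume * (volume s) ^ ((1:ℝ)/2)).toReal :=
          ENNReal.toReal_mono hne e2
      _ = (eLpNorm (fun x => ∑ j, c j x) 2 volume).toReal * ((volume s) ^ ((1:ℝ)/2)).toReal :=
          ENNReal.toReal_mul
      _ = ((volume s).toReal) ^ ((1:ℝ)/2) * (∫ x, ‖∑ j, c j x‖ ^ 2) ^ ((1:ℝ)/2) := by
          rw [toReal_eLpNorm_two hmf, ← ENNReal.toReal_rpow]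
          ring
  have hvols : (volume s).toReal = (R/r) ^ n * v₁ := by
    rw [hs]
    have h := Measure.addHaar_closedBall' (volume : Measure (EuclideanSpace ℝ (Fin n))) 0
      (div_nonneg hR.le hr.le)
    rw [finrank_euclideanSpace_fin] at h
    rw [h, ENNReal.toReal_mul, ENNReal.toReal_ofReal (by positivity), hv₁def]
  have hb2 : (eLpNorm (⇑b) 2 volume).toReal = I₂ ^ ((1:ℝ)/2) := by
    rw [toReal_eLpNorm_two hmb, hI₂def]
  have harith : ((R/r) ^ n * v₁) ^ ((1:ℝ)/2) * ((k:ℝ) * r ^ n * I₂) ^ ((1:ℝ)/2)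
      = v₁ ^ ((1:ℝ)/2) * R ^ ((n:ℝ)/2) * Real.sqrt k * I₂ ^ ((1:ℝ)/2) := by
    rw [Real.mul_rpow (by positivity) hv₁nn, Real.mul_rpow (by positivity) hI₂nn,
      Real.mul_rpow (Nat.cast_nonneg k) (by positivity), Real.sqrt_eq_rpow,
      ← Real.rpow_natCast (R/r) n, ← Real.rpow_natCast r n,
      ← Real.rpow_mul (by positivity), ← Real.rpow_mul hr.le,
      Real.div_rpow hR.le hr.le]
    simp only [mul_one_div]
    have hrne : r ^ ((n:ℝ)/2) ≠ 0 := by positivity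
    field_simp
  have hball : ∫ x in s, ‖∑ j, c j x‖ ≤
      v₁ ^ ((1:ℝ)/2) * R ^ ((n:ℝ)/2) * Real.sqrt k * (eLpNorm (⇑b) 2 volume).toReal := by
    calc ∫ x in s, ‖∑ j, c j x‖
        ≤ ((volume s).toReal) ^ ((1:ℝ)/2) * (∫ x, ‖∑ j, c j x‖ ^ 2) ^ ((1:ℝ)/2) := hcs
      _ = ((R/r) ^ n * v₁) ^ ((1:ℝ)/2) * ((k:ℝ) * r ^ n * I₂) ^ ((1:ℝ)/2) := by
          rw [hvols, hL2]
      _ = v₁ ^ ((1:ℝ)/2) * R ^ ((n:ℝ)/2) * Real.sqrt k * I₂ ^ ((1:ℝ)/2) := harith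
      _ = v₁ ^ ((1:ℝ)/2) * R ^ ((n:ℝ)/2) * Real.sqrt k * (eLpNorm (⇑b) 2 volume).toReal := by
          rw [hb2]
  -- tail part
  have hib : Integrable (fun u : EuclideanSpace ℝ (Fin n) => ‖u‖ * ‖b u‖) := by
    simpa using b.integrable_pow_mul (volume) 1
  have htail : ∫ x in sᶜ, ‖∑ j, c j x‖ ≤ ((k:ℝ)/R) * ∫ u, ‖u‖ * ‖b u‖ := by
    set T : Set (EuclideanSpace ℝ (Fin n)) := {u | R < ‖u‖} with hT
    have hTm : MeasurableSet T := (isOpen_lt continuous_const continuous_norm).measurableSet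
    have t1 : ∫ x in sᶜ, ‖∑ j, c j x‖ ≤ ∫ x in sᶜ, ∑ j, ‖c j x‖ :=
      integral_mono hf_int.norm.restrict
        (integrable_finset_sum _ fun j _ => (hcj_int j).norm.restrict)
        (fun x => norm_sum_le _ _)
    have t2 : ∫ x in sᶜ, ∑ j : Fin k, ‖c j x‖ = ∑ j : Fin k, ∫ x in sᶜ, ‖c j x‖ :=
      integral_finset_sum _ fun j _ => (hcj_int j).norm.restrict
    have t4 : ∫ x in sᶜ, ‖b (r • x)‖ = (r ^ n)⁻¹ * ∫ u in T, ‖b u‖ := by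
      have hind : ∀ x : EuclideanSpace ℝ (Fin n),
          (sᶜ).indicator (fun x => ‖b (r • x)‖) x = T.indicator (fun u => ‖b u‖) (r • x) := by
        intro x
        have hmem : x ∈ sᶜ ↔ (r • x) ∈ T := by
          simp only [hs, hT, mem_compl_iff, mem_closedBall, dist_zero_right, not_le, mem_setOf_eq,
            norm_smul, Real.norm_eq_abs, abs_of_nonneg hr.le]
          rw [div_lt_iff₀ hr, mul_comm]
        by_cases hx : x ∈ sᶜ
        · rw [indicator_of_mem hx, indicator_of_mem (hmem.1 hx)]
        · rw [indicator_of_notMem hx, indicator_of_notMem (fun h => hx (hmem.2 h))]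
      calc ∫ x in sᶜ, ‖b (r • x)‖
          = ∫ x, (sᶜ).indicator (fun x => ‖b (r • x)‖) x :=
            (integral_indicator measurableSet_closedBall.compl).symm
        _ = ∫ x, T.indicator (fun u => ‖b u‖) (r • x) := by simp_rw [hind]
        _ = (r ^ n)⁻¹ * ∫ u, T.indicator (fun u => ‖b u‖) u := by
            have h := Measure.integral_comp_smul (volume : Measure (EuclideanSpace ℝ (Fin n)))
              (T.indicator fun u => ‖b u‖) r
            rw [finrank_euclideanSpace_fin] at h
            rw [h, smul_eq_mul, abs_of_nonneg (by positivity)]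
        _ = (r ^ n)⁻¹ * ∫ u in T, ‖b u‖ := by rw [integral_indicator hTm]
    have t5 : ∫ u in T, ‖b u‖ ≤ (1/R) * ∫ u, ‖u‖ * ‖b u‖ := by
      have step1 : ∫ u in T, ‖b u‖ ≤ ∫ u in T, (1/R) * (‖u‖ * ‖b u‖) := by
        apply setIntegral_mono_on b.integrable.norm.integrableOn
          ((hib.const_mul _).integrableOn) hTm
        intro u hu
        have hu' : R < ‖u‖ := hu
        have h1 : 1 ≤ ‖u‖ / R := (one_le_div hR).2 hu'.le
        calc ‖b u‖ = 1 * ‖b u‖ := (one_mul _).symm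
          _ ≤ (‖u‖/R) * ‖b u‖ := mul_le_mul_of_nonneg_right h1 (norm_nonneg _)
          _ = (1/R) * (‖u‖ * ‖b u‖) := by ring
      have step2 : ∫ u in T, (1/R) * (‖u‖ * ‖b u‖) ≤ ∫ u, (1/R) * (‖u‖ * ‖b u‖) :=
        setIntegral_le_integral (hib.const_mul _)
          (Filter.Eventually.of_forall fun u => by positivity)
      calc ∫ u in T, ‖b u‖ ≤ ∫ u in T, (1/R) * (‖u‖ * ‖b u‖) := step1
        _ ≤ ∫ u, (1/R) * (‖u‖ * ‖b u‖) := step2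
        _ = (1/R) * ∫ u, ‖u‖ * ‖b u‖ := integral_const_mul _ _
    have t3 : ∀ j : Fin k, ∫ x in sᶜ, ‖c j x‖ = r ^ n * ∫ x in sᶜ, ‖b (r • x)‖ := by
      intro j
      simp_rw [hnorm_c]
      exact integral_const_mul _ _
    have hTnn : 0 ≤ ∫ u in T, ‖b u‖ := integral_nonneg fun u => norm_nonneg _
    calc ∫ x in sᶜ, ‖∑ j, c j x‖ ≤ ∫ x in sᶜ, ∑ j, ‖c j x‖ := t1
      _ = ∑ j : Fin k, ∫ x in sᶜ, ‖c j x‖ := t2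
      _ = ∑ j : Fin k, r ^ n * ((r ^ n)⁻¹ * ∫ u in T, ‖b u‖) := by
          exact Finset.sum_congr rfl fun j _ => by rw [t3 j, t4]
      _ = (k : ℝ) * ∫ u in T, ‖b u‖ := by
          rw [Finset.sum_const, Finset.card_univ, Fintype.card_fin, nsmul_eq_mul]
          have : r ^ n * ((r ^ n)⁻¹ * ∫ u in T, ‖b u‖) = ∫ u in T, ‖b u‖ := by
            field_simp
          rw [this]
      _ ≤ (k : ℝ) * ((1/R) * ∫ u, ‖u‖ * ‖b u‖) :=
          mul_le_mul_of_nonneg_left t5 (Nat.cast_nonneg k)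
      _ = ((k:ℝ)/R) * ∫ u, ‖u‖ * ‖b u‖ := by ring
  rw [hsplit]
  exact add_le_add hball htail
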